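/- arXiv:2407.03252 — 5 statements merged into one kernel-verified Lean document; each statement's English description precedes it below -/
import Mathlib

section
/- For β > 0 and s ∈ ℝ∖{0}, with a = √(|s|/(2β)), the real part of p₁(is) = √(isβ)/tanh(√(is/β)) equals β·a·(cosh a · sinh a + cos a · sin a)/(sinh²a + sin²a), and the real part of p₂(is) = −√(isβ)/sinh(√(is/β)) equals −β·a·(cos a · sinh a + cosh a · sin a)/(sinh²a + sin²a). -/
open Complex


lemma exp_half_sqrt (r : ℝ) (hr : 0 < r) :
    Complex.exp ((Real.log r : ℂ) / 2) = (Real.sqrt r : ℂ) := by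
  rw [show ((Real.log r : ℂ) / 2) = ((Real.log r / 2 : ℝ) : ℂ) by push_cast; ring,
    ← Complex.ofReal_exp]
  norm_cast
  rw [Real.sqrt_eq_rpow, Real.rpow_def_of_pos hr]
  ring_nf

lemma exp_repr (r : ℝ) (hr : 0 < r) (θ : ℝ) :
    Complex.exp ((Real.log r : ℂ) + ((θ : ℝ) : ℂ) * Complex.I)
      = (r : ℂ) * ((Real.cos θ : ℂ) + (Real.sin θ : ℂ) * Complex.I) := by
  rw [Complex.exp_add, ← Complex.ofReal_exp, Real.exp_log hr, Complex.exp_mul_I,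
    Complex.ofReal_cos, Complex.ofReal_sin]

lemma cpow_half_I (r : ℝ) (hr : 0 < r) :
    ((Complex.I * r) : ℂ) ^ ((1:ℂ)/2) = (Real.sqrt (r/2) : ℂ) * (1 + Complex.I) := by
  have h2 : (0:ℝ) < Real.sqrt 2 := by positivity
  have hz : (Complex.I * r : ℂ) = Complex.exp ((Real.log r : ℂ) + ((Real.pi/2 : ℝ) : ℂ) * Complex.I) := by
    rw [exp_repr r hr, Real.cos_pi_div_two, Real.sin_pi_div_two]
    push_cast; ring
  have hne : (Complex.I * r : ℂ) ≠ 0 := by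
    simp [Complex.ext_iff, hr.ne']
  rw [Complex.cpow_def_of_ne_zero hne, hz, Complex.log_exp (by
      simp; linarith [Real.pi_pos]) (by simp; linarith [Real.pi_pos])]
  have : ((Real.log r : ℂ) + ((Real.pi/2 : ℝ) : ℂ) * Complex.I) * (1/2)
      = (Real.log r : ℂ)/2 + ((Real.pi/4 : ℝ) : ℂ) * Complex.I := by push_cast; ring
  rw [this, Complex.exp_add, exp_half_sqrt r hr, Complex.exp_mul_I,
    ← Complex.ofReal_cos, ← Complex.ofReal_sin,
    Real.cos_pi_div_four, Real.sin_pi_div_four]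
  have hs : Real.sqrt r * (Real.sqrt 2 / 2) = Real.sqrt (r/2) := by
    rw [Real.sqrt_div hr.le 2]
    field_simp
    nlinarith [Real.sq_sqrt (by norm_num : (0:ℝ) ≤ 2), Real.sqrt_nonneg r]
  rw [← hs]
  push_cast; ring

lemma cpow_half_neg_I (r : ℝ) (hr : 0 < r) :
    ((Complex.I * (-r : ℝ)) : ℂ) ^ ((1:ℂ)/2) = (Real.sqrt (r/2) : ℂ) * (1 - Complex.I) := by
  have hz : (Complex.I * (-r : ℝ) : ℂ) = Complex.exp ((Real.log r : ℂ) + ((-(Real.pi/2) : ℝ) : ℂ) * Complex.I) := by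
    rw [exp_repr r hr]
    rw [Real.cos_neg, Real.sin_neg, Real.cos_pi_div_two, Real.sin_pi_div_two]
    push_cast; ring
  have hne : (Complex.I * (-r : ℝ) : ℂ) ≠ 0 := by
    simp [Complex.ext_iff, hr.ne']
  rw [Complex.cpow_def_of_ne_zero hne, hz, Complex.log_exp (by
      simp; linarith [Real.pi_pos]) (by simp; linarith [Real.pi_pos])]
  have : ((Real.log r : ℂ) + ((-(Real.pi/2) : ℝ) : ℂ) * Complex.I) * (1/2)
      = (Real.log r : ℂ)/2 + ((-(Real.pi/4) : ℝ) : ℂ) * Complex.I := by push_cast; ring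
  rw [this, Complex.exp_add, exp_half_sqrt r hr, Complex.exp_mul_I,
    ← Complex.ofReal_cos, ← Complex.ofReal_sin]
  rw [Real.cos_neg, Real.sin_neg, Real.cos_pi_div_four, Real.sin_pi_div_four]
  have h2 : (0:ℝ) < Real.sqrt 2 := by positivity
  have hs : Real.sqrt r * (Real.sqrt 2 / 2) = Real.sqrt (r/2) := by
    rw [Real.sqrt_div hr.le 2]
    field_simp
    nlinarith [Real.sq_sqrt (by norm_num : (0:ℝ) ≤ 2), Real.sqrt_nonneg r]
  rw [← hs]
  push_cast; ring

lemma sinh_repr (a : ℝ) :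
    Complex.sinh ((a:ℂ)*(1+Complex.I))
      = ((Real.sinh a * Real.cos a : ℝ) : ℂ) + ((Real.cosh a * Real.sin a : ℝ) : ℂ) * Complex.I := by
  rw [show (a:ℂ)*(1+Complex.I) = (a:ℂ) + (a:ℂ)*Complex.I by ring, Complex.sinh_add,
    Complex.cosh_mul_I, Complex.sinh_mul_I]
  push_cast [← Complex.ofReal_sinh, ← Complex.ofReal_cosh, ← Complex.ofReal_sin,
    ← Complex.ofReal_cos]
  ring

lemma cosh_repr (a : ℝ) :
    Complex.cosh ((a:ℂ)*(1+Complex.I))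
      = ((Real.cosh a * Real.cos a : ℝ) : ℂ) + ((Real.sinh a * Real.sin a : ℝ) : ℂ) * Complex.I := by
  rw [show (a:ℂ)*(1+Complex.I) = (a:ℂ) + (a:ℂ)*Complex.I by ring, Complex.cosh_add,
    Complex.cosh_mul_I, Complex.sinh_mul_I]
  push_cast [← Complex.ofReal_sinh, ← Complex.ofReal_cosh, ← Complex.ofReal_sin,
    ← Complex.ofReal_cos]
  ring

lemma re_div_aux (x y u v : ℝ) :
    (((x:ℂ) + (y:ℂ)*Complex.I) / ((u:ℂ) + (v:ℂ)*Complex.I)).re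
      = (x*u + y*v)/(u^2 + v^2) := by
  rw [Complex.div_re]
  simp [Complex.normSq_apply]
  ring

lemma D_eq (a : ℝ) :
    (Real.sinh a * Real.cos a)^2 + (Real.cosh a * Real.sin a)^2
      = Real.sinh a ^ 2 + Real.sin a ^ 2 := by
  nlinarith [Real.cosh_sq_sub_sinh_sq a, Real.sin_sq_add_cos_sq a]

lemma re_p1_aux (c a : ℝ) :
    (((c:ℂ)*(1+Complex.I)) / Complex.tanh ((a:ℂ)*(1+Complex.I))).re
      = c * (Real.cosh a * Real.sinh a + Real.cos a * Real.sin a)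
          / (Real.sinh a ^ 2 + Real.sin a ^ 2) := by
  rw [Complex.tanh_eq_sinh_div_cosh, div_div_eq_mul_div, cosh_repr, sinh_repr]
  rw [show ((c:ℂ)*(1+Complex.I)) * (((Real.cosh a * Real.cos a : ℝ) : ℂ)
        + ((Real.sinh a * Real.sin a : ℝ) : ℂ) * Complex.I)
      = (((c*(Real.cosh a * Real.cos a - Real.sinh a * Real.sin a) : ℝ)) : ℂ)
        + (((c*(Real.cosh a * Real.cos a + Real.sinh a * Real.sin a) : ℝ)) : ℂ) * Complex.I by
    simp only [Complex.ofReal_mul, Complex.ofReal_sub, Complex.ofReal_add]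
    linear_combination ((c : ℂ) * Real.sinh a * Real.sin a) * Complex.I_sq]
  rw [re_div_aux, D_eq a]
  congr 1
  linear_combination (c * Real.cosh a * Real.sinh a) * (Real.sin_sq_add_cos_sq a)
    + (c * Real.cos a * Real.sin a) * (Real.cosh_sq_sub_sinh_sq a)

lemma re_p2_aux (c a : ℝ) :
    ((-((c:ℂ)*(1+Complex.I))) / Complex.sinh ((a:ℂ)*(1+Complex.I))).re
      = -(c * (Real.cos a * Real.sinh a + Real.cosh a * Real.sin a)
          / (Real.sinh a ^ 2 + Real.sin a ^ 2)) := by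
  rw [sinh_repr]
  rw [show -((c:ℂ)*(1+Complex.I)) = (((-c : ℝ)) : ℂ) + (((-c : ℝ)) : ℂ) * Complex.I by
    push_cast; ring]
  rw [re_div_aux, D_eq a]
  ring

lemma re_p1_aux' (c a : ℝ) :
    (((c:ℂ)*(1-Complex.I)) / Complex.tanh ((a:ℂ)*(1-Complex.I))).re
      = c * (Real.cosh a * Real.sinh a + Real.cos a * Real.sin a)
          / (Real.sinh a ^ 2 + Real.sin a ^ 2) := by
  have h1 : ((c:ℂ)*(1-Complex.I)) = (starRingEnd ℂ) ((c:ℂ)*(1+Complex.I)) := by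
    simp [Complex.ext_iff]
  have h2 : ((a:ℂ)*(1-Complex.I)) = (starRingEnd ℂ) ((a:ℂ)*(1+Complex.I)) := by
    simp [Complex.ext_iff]
  rw [h1, h2, Complex.tanh_eq_sinh_div_cosh, Complex.sinh_conj, Complex.cosh_conj,
    ← map_div₀, ← map_div₀, Complex.conj_re, ← Complex.tanh_eq_sinh_div_cosh]
  exact re_p1_aux c a

lemma re_p2_aux' (c a : ℝ) :
    ((-((c:ℂ)*(1-Complex.I))) / Complex.sinh ((a:ℂ)*(1-Complex.I))).re
      = -(c * (Real.cos a * Real.sinh a + Real.cosh a * Real.sin a)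
          / (Real.sinh a ^ 2 + Real.sin a ^ 2)) := by
  have h1 : (-((c:ℂ)*(1-Complex.I))) = (starRingEnd ℂ) (-((c:ℂ)*(1+Complex.I))) := by
    simp [Complex.ext_iff]
  have h2 : ((a:ℂ)*(1-Complex.I)) = (starRingEnd ℂ) ((a:ℂ)*(1+Complex.I)) := by
    simp [Complex.ext_iff]
  rw [h1, h2, Complex.sinh_conj, ← map_div₀, Complex.conj_re]
  exact re_p2_aux c a

noncomputable def p1 (β : ℝ) (z : ℂ) : ℂ :=
  (z * (β : ℂ)) ^ ((1:ℂ)/2) / Complex.tanh ((z / (β : ℂ)) ^ ((1:ℂ)/2))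

noncomputable def p2 (β : ℝ) (z : ℂ) : ℂ :=
  -((z * (β : ℂ)) ^ ((1:ℂ)/2)) / Complex.sinh ((z / (β : ℂ)) ^ ((1:ℂ)/2))

/-- explicit real parts of p₁(is), p₂(is) for s ≠ 0, where
a = √(|s|/(2β)). -/
theorem real_parts_on_imaginary_axis
    (β s : ℝ) (hβ : 0 < β) (hs : s ≠ 0) :
    (p1 β (Complex.I * (s : ℂ))).re
        = β * Real.sqrt (|s| / (2 * β))
            * (Real.cosh (Real.sqrt (|s| / (2 * β))) * Real.sinh (Real.sqrt (|s| / (2 * β)))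
                + Real.cos (Real.sqrt (|s| / (2 * β))) * Real.sin (Real.sqrt (|s| / (2 * β))))
            / (Real.sinh (Real.sqrt (|s| / (2 * β))) ^ 2
                + Real.sin (Real.sqrt (|s| / (2 * β))) ^ 2)
      ∧ (p2 β (Complex.I * (s : ℂ))).re
        = -(β * Real.sqrt (|s| / (2 * β))
            * (Real.cos (Real.sqrt (|s| / (2 * β))) * Real.sinh (Real.sqrt (|s| / (2 * β)))
                + Real.cosh (Real.sqrt (|s| / (2 * β))) * Real.sin (Real.sqrt (|s| / (2 * β))))
            / (Real.sinh (Real.sqrt (|s| / (2 * β))) ^ 2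
                + Real.sin (Real.sqrt (|s| / (2 * β))) ^ 2)) := by
  set a : ℝ := Real.sqrt (|s| / (2 * β)) with ha
  have hβa : Real.sqrt (|s| * β / 2) = β * a := by
    rw [ha, show |s| * β / 2 = β^2 * (|s| / (2*β)) by field_simp,
      Real.sqrt_mul (sq_nonneg β), Real.sqrt_sq hβ.le]
  have hdiv : |s| / β / 2 = |s| / (2 * β) := by ring
  rcases hs.lt_or_gt with hneg | hpos
  · -- s < 0
    have habs : |s| = -s := abs_of_neg hneg
    have h1 : Complex.I * (s:ℂ) * (β:ℂ) = Complex.I * ((-(|s| * β) : ℝ) : ℂ) := by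
      rw [habs]; push_cast; ring
    have h2 : Complex.I * (s:ℂ) / (β:ℂ) = Complex.I * ((-(|s| / β) : ℝ) : ℂ) := by
      rw [habs]; push_cast
      field_simp
    have hsb : 0 < |s| * β := by positivity
    have hsdb : 0 < |s| / β := by positivity
    have e1 : (Complex.I * (s:ℂ) * (β:ℂ)) ^ ((1:ℂ)/2)
        = ((β * a : ℝ) : ℂ) * (1 - Complex.I) := by
      rw [h1, cpow_half_neg_I _ hsb, hβa]
    have e2 : (Complex.I * (s:ℂ) / (β:ℂ)) ^ ((1:ℂ)/2)
        = ((a : ℝ) : ℂ) * (1 - Complex.I) := by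
      rw [h2, cpow_half_neg_I _ hsdb, hdiv, ← ha]
    constructor
    · rw [p1, e1, e2]
      exact re_p1_aux' (β * a) a
    · rw [p2, e1, e2]
      exact re_p2_aux' (β * a) a
  · -- s > 0
    have habs : |s| = s := abs_of_pos hpos
    have h1 : Complex.I * (s:ℂ) * (β:ℂ) = Complex.I * (((|s| * β) : ℝ) : ℂ) := by
      rw [habs]; push_cast; ring
    have h2 : Complex.I * (s:ℂ) / (β:ℂ) = Complex.I * (((|s| / β) : ℝ) : ℂ) := by
      rw [habs]; push_cast
      field_simp
    have hsb : 0 < |s| * β := by positivity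
    have hsdb : 0 < |s| / β := by positivity
    have e1 : (Complex.I * (s:ℂ) * (β:ℂ)) ^ ((1:ℂ)/2)
        = ((β * a : ℝ) : ℂ) * (1 + Complex.I) := by
      rw [h1, cpow_half_I _ hsb, hβa]
    have e2 : (Complex.I * (s:ℂ) / (β:ℂ)) ^ ((1:ℂ)/2)
        = ((a : ℝ) : ℂ) * (1 + Complex.I) := by
      rw [h2, cpow_half_I _ hsdb, hdiv, ← ha]
    constructor
    · rw [p1, e1, e2]
      exact re_p1_aux (β * a) a
    · rw [p2, e1, e2]
      exact re_p2_aux (β * a) a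
end

section
/- For every a > 0, cosh(a) sinh(a) + cos(a) sin(a) > 0; consequently, for every β > 0 and s ∈ ℝ∖{0}, Re p₁(is) > 0 where p₁(λ) = √(λβ)/tanh(√(λ/β)). -/
open Complex

lemma part1_aux (a : ℝ) (ha : 0 < a) :
    0 < Real.cosh a * Real.sinh a + Real.cos a * Real.sin a := by
  have h1 : a < Real.sinh a := Real.self_lt_sinh_iff.2 ha
  have h2 : (1:ℝ) < Real.cosh a := Real.one_lt_cosh.2 ha.ne'
  have h3 := abs_le.1 (le_trans Real.abs_sin_le_abs (le_of_eq (abs_of_pos ha)))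
  have h4 := abs_le.1 (Real.abs_cos_le_one a)
  nlinarith [h3.1, h3.2, h4.1, h4.2]

lemma arg_I_mul (r : ℝ) (hr : 0 < r) : (Complex.I * (r : ℂ)).arg = Real.pi / 2 := by
  apply Complex.arg_eq_pi_div_two_iff.2
  constructor <;> simp [hr]

lemma cpow_half_I_mul (r : ℝ) (hr : 0 < r) :
    ∃ c : ℝ, 0 < c ∧ (Complex.I * (r : ℂ)) ^ ((1:ℂ)/2) = (c : ℂ) * (1 + Complex.I) := by
  refine ⟨Real.exp (Real.log r / 2) * (Real.sqrt 2 / 2), ?_, ?_⟩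
  · positivity
  · have hz : (Complex.I * (r : ℂ)) ≠ 0 := by
      simp [Complex.I_ne_zero, Complex.ofReal_ne_zero, hr.ne']
    rw [Complex.cpow_def_of_ne_zero hz]
    have hlog : Complex.log (Complex.I * (r : ℂ)) =
        (Real.log r : ℂ) + (Real.pi / 2 : ℝ) * Complex.I := by
      apply Complex.ext
      · simp [Complex.log_re, abs_of_pos hr]
      · simp [Complex.log_im, arg_I_mul r hr]
    rw [hlog]
    have : ((Real.log r : ℂ) + (Real.pi / 2 : ℝ) * Complex.I) * ((1:ℂ)/2)
        = (Real.log r / 2 : ℝ) + (Real.pi / 4 : ℝ) * Complex.I := by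
      push_cast; ring
    rw [this, Complex.exp_add, Complex.exp_mul_I]
    rw [← Complex.ofReal_exp, ← Complex.ofReal_cos, ← Complex.ofReal_sin,
      Real.cos_pi_div_four, Real.sin_pi_div_four]
    push_cast; ring

lemma re_pos_aux (c a : ℝ) (hc : 0 < c) (ha : 0 < a) :
    0 < (((c : ℂ) * (1 + Complex.I)) / Complex.tanh ((a : ℂ) * (1 + Complex.I))).re := by
  set A := Real.sinh a * Real.cos a with hA
  set B := Real.cosh a * Real.sin a with hB
  set C := Real.cosh a * Real.cos a with hC
  set D := Real.sinh a * Real.sin a with hD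
  have hsinh : Complex.sinh ((a : ℂ) * (1 + Complex.I)) = ⟨A, B⟩ := by
    have : (a : ℂ) * (1 + Complex.I) = (a : ℂ) + (a : ℂ) * Complex.I := by ring
    rw [this, Complex.sinh_add, Complex.sinh_mul_I, Complex.cosh_mul_I,
      ← Complex.ofReal_sinh, ← Complex.ofReal_cosh, ← Complex.ofReal_cos, ← Complex.ofReal_sin]
    apply Complex.ext <;>
      simp [hA, hB, Complex.mul_re, Complex.mul_im, Complex.sinh_ofReal_re,
        Complex.sinh_ofReal_im, Complex.cosh_ofReal_re, Complex.cosh_ofReal_im,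
        Complex.sin_ofReal_re, Complex.sin_ofReal_im, Complex.cos_ofReal_re,
        Complex.cos_ofReal_im]
  have hcosh : Complex.cosh ((a : ℂ) * (1 + Complex.I)) = ⟨C, D⟩ := by
    have : (a : ℂ) * (1 + Complex.I) = (a : ℂ) + (a : ℂ) * Complex.I := by ring
    rw [this, Complex.cosh_add, Complex.sinh_mul_I, Complex.cosh_mul_I,
      ← Complex.ofReal_sinh, ← Complex.ofReal_cosh, ← Complex.ofReal_cos, ← Complex.ofReal_sin]
    apply Complex.ext <;>
      simp [hC, hD, Complex.mul_re, Complex.mul_im, Complex.sinh_ofReal_re,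
        Complex.sinh_ofReal_im, Complex.cosh_ofReal_re, Complex.cosh_ofReal_im,
        Complex.sin_ofReal_re, Complex.sin_ofReal_im, Complex.cos_ofReal_re,
        Complex.cos_ofReal_im]
  rw [Complex.tanh_eq_sinh_div_cosh, div_div_eq_mul_div, hsinh, hcosh]
  have hnum : ((c : ℂ) * (1 + Complex.I)) * (⟨C, D⟩ : ℂ) = ⟨c * (C - D), c * (C + D)⟩ := by
    apply Complex.ext <;> simp [Complex.mul_re, Complex.mul_im] <;> ring
  have hsq := Real.sin_sq_add_cos_sq a
  have hhyp := Real.cosh_sq_sub_sinh_sq a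
  have hs : 0 < Real.sinh a := lt_trans ha (Real.self_lt_sinh_iff.2 ha)
  have hns : Complex.normSq (⟨A, B⟩ : ℂ) = A ^ 2 + B ^ 2 := by
    simp [Complex.normSq_apply]; ring
  have hid : A ^ 2 + B ^ 2 = Real.sinh a ^ 2 + Real.sin a ^ 2 := by
    simp only [hA, hB]
    linear_combination (Real.sinh a ^ 2) * hsq + (Real.sin a ^ 2) * hhyp
  have hnspos : 0 < A ^ 2 + B ^ 2 := by
    rw [hid]; nlinarith [sq_nonneg (Real.sin a)]
  have hkey : c * (C - D) * A + c * (C + D) * B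
      = c * (Real.cosh a * Real.sinh a + Real.cos a * Real.sin a) := by
    simp only [hA, hB, hC, hD]
    linear_combination (c * Real.cosh a * Real.sinh a) * hsq +
      (c * Real.cos a * Real.sin a) * hhyp
  have hpos : 0 < c * (Real.cosh a * Real.sinh a + Real.cos a * Real.sin a) :=
    mul_pos hc (part1_aux a ha)
  rw [hnum, Complex.div_re, hns]
  have hre : (⟨c * (C - D), c * (C + D)⟩ : ℂ).re = c * (C - D) := rfl
  have him : (⟨c * (C - D), c * (C + D)⟩ : ℂ).im = c * (C + D) := rfl
  rw [hre, him, ← add_div]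
  apply div_pos _ hnspos
  linarith [hkey, hpos]

lemma re_p1_pos_of_pos (β s : ℝ) (hβ : 0 < β) (hs : 0 < s) :
    0 < (p1 β (Complex.I * (s : ℂ))).re := by
  unfold p1
  have h1 : Complex.I * (s : ℂ) * (β : ℂ) = Complex.I * ((s * β : ℝ) : ℂ) := by
    push_cast; ring
  have h2 : Complex.I * (s : ℂ) / (β : ℂ) = Complex.I * ((s / β : ℝ) : ℂ) := by
    push_cast; ring
  rw [h1, h2]
  obtain ⟨c1, hc1, e1⟩ := cpow_half_I_mul (s * β) (mul_pos hs hβ)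
  obtain ⟨c2, hc2, e2⟩ := cpow_half_I_mul (s / β) (div_pos hs hβ)
  rw [e1, e2]
  exact re_pos_aux c1 c2 hc1 hc2

/-- for a > 0, cosh a · sinh a + cos a · sin a > 0; consequently
Re p₁(is) > 0 for all β > 0 and s ≠ 0. -/
theorem cosh_sinh_add_cos_sin_pos_and_re_p1_pos :
    (∀ a : ℝ, 0 < a → 0 < Real.cosh a * Real.sinh a + Real.cos a * Real.sin a)
      ∧ ∀ (β s : ℝ), 0 < β → s ≠ 0 → 0 < (p1 β (Complex.I * (s : ℂ))).re := by
  refine ⟨part1_aux, fun β s hβ hs => ?_⟩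
  rcases hs.lt_or_gt with hneg | hpos
  · -- s < 0 : use conjugation
    set t : ℝ := -s with ht
    have htpos : 0 < t := by simp [ht]; linarith
    have hzt : Complex.I * (s : ℂ) = (starRingEnd ℂ) (Complex.I * (t : ℂ)) := by
      rw [map_mul, Complex.conj_I, Complex.conj_ofReal]
      rw [ht]; push_cast; ring
    have hconj : p1 β (Complex.I * (s : ℂ)) =
        (starRingEnd ℂ) (p1 β (Complex.I * (t : ℂ))) := by
      rw [hzt]
      unfold p1
      have harg1 : (Complex.I * (t : ℂ) * (β : ℂ)).arg ≠ Real.pi := by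
        have : Complex.I * (t : ℂ) * (β : ℂ) = Complex.I * ((t * β : ℝ) : ℂ) := by
          push_cast; ring
        rw [this, arg_I_mul (t * β) (mul_pos htpos hβ)]
        intro h; have := Real.pi_pos; linarith
      have harg2 : (Complex.I * (t : ℂ) / (β : ℂ)).arg ≠ Real.pi := by
        have : Complex.I * (t : ℂ) / (β : ℂ) = Complex.I * ((t / β : ℝ) : ℂ) := by
          push_cast; ring
        rw [this, arg_I_mul (t / β) (div_pos htpos hβ)]
        intro h; have := Real.pi_pos; linarith
      have hhalf : (starRingEnd ℂ) ((1:ℂ)/2) = (1:ℂ)/2 := by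
        have : ((1:ℂ)/2) = (((1:ℝ)/2 : ℝ) : ℂ) := by norm_num
        rw [this, Complex.conj_ofReal]
      have hm : (starRingEnd ℂ) (Complex.I * (t : ℂ)) * (β : ℂ)
          = (starRingEnd ℂ) (Complex.I * (t : ℂ) * (β : ℂ)) := by
        simp [map_mul, Complex.conj_ofReal]
      have hd : (starRingEnd ℂ) (Complex.I * (t : ℂ)) / (β : ℂ)
          = (starRingEnd ℂ) (Complex.I * (t : ℂ) / (β : ℂ)) := by
        simp [map_div₀, Complex.conj_ofReal]
      rw [hm, hd]
      rw [Complex.conj_cpow _ _ harg1, Complex.conj_cpow _ _ harg2, hhalf]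
      rw [Complex.tanh_conj, ← map_div₀]
    rw [hconj, Complex.conj_re]
    exact re_p1_pos_of_pos β t hβ htpos
  · exact re_p1_pos_of_pos β s hβ hpos
end

section
/- For every a > 0, (cosh a · sinh a + cos a · sin a)² − (cos a · sinh a + cosh a · sin a)² = (sinh²a − sin²a)(sinh²a + sin²a); consequently, for β > 0 and s ≠ 0, (Re p₁(is))² − (Re p₂(is))² = (β|s|/2)·(sinh²a − sin²a)/(sinh²a + sin²a) > 0 where a = √(|s|/(2β)). -/
open Complex

lemma sqrt_mul_sqrt_two_div_two (t : ℝ) (ht : 0 ≤ t) :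
    Real.sqrt t * (Real.sqrt 2 / 2) = Real.sqrt (t / 2) := by
  rw [Real.sqrt_div ht 2]
  have h2 : Real.sqrt 2 * Real.sqrt 2 = 2 := Real.mul_self_sqrt (by norm_num)
  have h2pos : (0:ℝ) < Real.sqrt 2 := Real.sqrt_pos.2 (by norm_num)
  field_simp
  linear_combination Real.sqrt t * h2

lemma cpow_half_I_pos (t : ℝ) (ht : 0 < t) :
    (Complex.I * (t : ℂ)) ^ ((1:ℂ)/2) = ((Real.sqrt (t/2) : ℝ) : ℂ) * (1 + Complex.I) := by
  have hz : Complex.I * (t : ℂ) ≠ 0 := by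
    simp [Complex.ext_iff, ht.ne']
  rw [Complex.cpow_def_of_ne_zero hz]
  have habs : ‖Complex.I * (t:ℂ)‖ = t := by
    simp [Complex.norm_I, abs_of_pos ht]
  have harg : Complex.arg (Complex.I * (t:ℂ)) = Real.pi / 2 := by
    rw [Complex.arg_eq_pi_div_two_iff]
    constructor <;> simp [ht]
  have hlog : Complex.log (Complex.I * (t:ℂ))
      = ((Real.log t : ℝ) : ℂ) + ((Real.pi/2 : ℝ) : ℂ) * Complex.I := by
    apply Complex.ext
    · simp [Complex.log_re, habs]
    · simp [Complex.log_im, harg]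
  rw [hlog]
  have hmul : (((Real.log t : ℝ):ℂ) + ((Real.pi/2 : ℝ):ℂ) * Complex.I) * (1/2)
      = ((Real.log t / 2 : ℝ) : ℂ) + ((Real.pi/4 : ℝ) : ℂ) * Complex.I := by
    push_cast; ring
  rw [hmul, Complex.exp_add, Complex.exp_mul_I, ← Complex.ofReal_exp,
    ← Complex.ofReal_cos, ← Complex.ofReal_sin,
    Real.cos_pi_div_four, Real.sin_pi_div_four]
  have hexp : Real.exp (Real.log t / 2) = Real.sqrt t := by
    rw [Real.sqrt_eq_rpow, Real.rpow_def_of_pos ht]; ring_nf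
  rw [hexp, ← sqrt_mul_sqrt_two_div_two t ht.le]
  push_cast
  ring

lemma cpow_half_I_neg (t : ℝ) (ht : t < 0) :
    (Complex.I * (t : ℂ)) ^ ((1:ℂ)/2) = ((Real.sqrt (-t/2) : ℝ) : ℂ) * (1 - Complex.I) := by
  have hz : Complex.I * (t : ℂ) ≠ 0 := by
    simp [Complex.ext_iff, ht.ne]
  rw [Complex.cpow_def_of_ne_zero hz]
  have habs : ‖Complex.I * (t:ℂ)‖ = -t := by
    simp [Complex.norm_I, abs_of_neg ht]
  have harg : Complex.arg (Complex.I * (t:ℂ)) = -(Real.pi / 2) := by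
    rw [Complex.arg_eq_neg_pi_div_two_iff]
    constructor <;> simp [ht]
  have hlog : Complex.log (Complex.I * (t:ℂ))
      = ((Real.log (-t) : ℝ) : ℂ) + ((-(Real.pi/2) : ℝ) : ℂ) * Complex.I := by
    apply Complex.ext
    · simp [Complex.log_re, habs]
    · simp [Complex.log_im, harg]
  rw [hlog]
  have hmul : (((Real.log (-t) : ℝ):ℂ) + ((-(Real.pi/2) : ℝ):ℂ) * Complex.I) * (1/2)
      = ((Real.log (-t) / 2 : ℝ) : ℂ) + ((-(Real.pi/4) : ℝ) : ℂ) * Complex.I := by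
    push_cast; ring
  rw [hmul, Complex.exp_add, Complex.exp_mul_I, ← Complex.ofReal_exp,
    ← Complex.ofReal_cos, ← Complex.ofReal_sin,
    Real.cos_neg, Real.sin_neg, Real.cos_pi_div_four, Real.sin_pi_div_four]
  have hexp : Real.exp (Real.log (-t) / 2) = Real.sqrt (-t) := by
    rw [Real.sqrt_eq_rpow, Real.rpow_def_of_pos (by linarith)]; ring_nf
  rw [hexp, ← sqrt_mul_sqrt_two_div_two (-t) (by linarith)]
  push_cast
  ring

lemma p_re (β s : ℝ) (hβ : 0 < β) (hs : s ≠ 0) :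
    (p1 β (Complex.I * (s : ℂ))).re
      = β * Real.sqrt (|s|/(2*β)) *
          (Real.cosh (Real.sqrt (|s|/(2*β))) * Real.sinh (Real.sqrt (|s|/(2*β)))
            + Real.cos (Real.sqrt (|s|/(2*β))) * Real.sin (Real.sqrt (|s|/(2*β))))
          / (Real.sinh (Real.sqrt (|s|/(2*β))) ^ 2 + Real.sin (Real.sqrt (|s|/(2*β))) ^ 2)
    ∧ (p2 β (Complex.I * (s : ℂ))).re
      = -(β * Real.sqrt (|s|/(2*β)) *
          (Real.cos (Real.sqrt (|s|/(2*β))) * Real.sinh (Real.sqrt (|s|/(2*β)))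
            + Real.cosh (Real.sqrt (|s|/(2*β))) * Real.sin (Real.sqrt (|s|/(2*β)))))
          / (Real.sinh (Real.sqrt (|s|/(2*β))) ^ 2 + Real.sin (Real.sqrt (|s|/(2*β))) ^ 2) := by
  set a := Real.sqrt (|s|/(2*β)) with ha_def
  have hsabs : 0 < |s| := abs_pos.2 hs
  have ha0 : 0 < a := Real.sqrt_pos.2 (by positivity)
  have hC : Real.cosh a ^ 2 = Real.sinh a ^ 2 + 1 := Real.cosh_sq a
  have hP : Real.sin a ^ 2 + Real.cos a ^ 2 = 1 := Real.sin_sq_add_cos_sq a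
  have hS : 0 < Real.sinh a := Real.sinh_pos_iff.2 ha0
  have hD : 0 < Real.sinh a ^ 2 + Real.sin a ^ 2 := by nlinarith
  have hD2 : Real.sinh a * Real.cos a * (Real.sinh a * Real.cos a)
      + Real.cosh a * Real.sin a * (Real.cosh a * Real.sin a)
      = Real.sinh a ^ 2 + Real.sin a ^ 2 := by
    linear_combination Real.sin a ^ 2 * hC + Real.sinh a ^ 2 * hP
  rcases hs.lt_or_gt with h | h
  · -- s < 0
    have habs : |s| = -s := abs_of_neg h
    have h1 : Complex.I * (s:ℂ) * (β:ℂ) = Complex.I * ((s*β : ℝ):ℂ) := by push_cast; ring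
    have h2 : Complex.I * (s:ℂ) / (β:ℂ) = Complex.I * ((s/β : ℝ):ℂ) := by push_cast; ring
    have ha : Real.sqrt (-(s*β)/2) = β * a := by
      rw [ha_def, habs]
      rw [show -(s*β)/2 = β^2 * (-s/(2*β)) by field_simp, Real.sqrt_mul (sq_nonneg β),
        Real.sqrt_sq hβ.le]
    have hb : Real.sqrt (-(s/β)/2) = a := by
      rw [ha_def, habs, show -(s/β)/2 = -s/(2*β) by ring]
    rw [p1, p2, h1, h2, cpow_half_I_neg _ (mul_neg_of_neg_of_pos h hβ),
      cpow_half_I_neg _ (div_neg_of_neg_of_pos h hβ), ha, hb]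
    have hw : ((a:ℝ) : ℂ) * (1 - Complex.I) = (a:ℂ) + ((-a : ℝ):ℂ) * Complex.I := by
      push_cast; ring
    have hsinh : Complex.sinh ((a:ℂ) + ((-a : ℝ):ℂ) * Complex.I)
        = ((Real.sinh a * Real.cos a : ℝ):ℂ)
          + ((-(Real.cosh a * Real.sin a) : ℝ):ℂ) * Complex.I := by
      rw [Complex.sinh_add, Complex.sinh_mul_I, Complex.cosh_mul_I, ← Complex.ofReal_sinh,
        ← Complex.ofReal_cosh, ← Complex.ofReal_sin, ← Complex.ofReal_cos]
      push_cast [Real.cos_neg, Real.sin_neg]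
      ring
    have hcosh : Complex.cosh ((a:ℂ) + ((-a : ℝ):ℂ) * Complex.I)
        = ((Real.cosh a * Real.cos a : ℝ):ℂ)
          + ((-(Real.sinh a * Real.sin a) : ℝ):ℂ) * Complex.I := by
      rw [Complex.cosh_add, Complex.sinh_mul_I, Complex.cosh_mul_I, ← Complex.ofReal_sinh,
        ← Complex.ofReal_cosh, ← Complex.ofReal_sin, ← Complex.ofReal_cos]
      push_cast [Real.cos_neg, Real.sin_neg]
      ring
    rw [hw, Complex.tanh_eq_sinh_div_cosh, div_div_eq_mul_div, hsinh, hcosh]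
    constructor
    · simp only [Complex.div_re, Complex.neg_re, Complex.neg_im, Complex.mul_re, Complex.mul_im,
        Complex.add_re, Complex.add_im, Complex.sub_re, Complex.sub_im, Complex.one_re,
        Complex.one_im, Complex.I_re, Complex.I_im, Complex.ofReal_re, Complex.ofReal_im,
        Complex.normSq_apply, mul_zero, zero_mul, mul_one, sub_zero, zero_sub, add_zero,
        zero_add, neg_zero, neg_neg, mul_neg, neg_mul]
      rw [hD2]
      field_simp
      linear_combination (Real.cosh a * Real.sinh a) * hP
        + (Real.cos a * Real.sin a) * hC
    · simp only [Complex.div_re, Complex.neg_re, Complex.neg_im, Complex.mul_re, Complex.mul_im,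
        Complex.add_re, Complex.add_im, Complex.sub_re, Complex.sub_im, Complex.one_re,
        Complex.one_im, Complex.I_re, Complex.I_im, Complex.ofReal_re, Complex.ofReal_im,
        Complex.normSq_apply, mul_zero, zero_mul, mul_one, sub_zero, zero_sub, add_zero,
        zero_add, neg_zero, neg_neg, mul_neg, neg_mul]
      rw [hD2]
      field_simp
      ring_nf
  · -- 0 < s
    have habs : |s| = s := abs_of_pos h
    have h1 : Complex.I * (s:ℂ) * (β:ℂ) = Complex.I * ((s*β : ℝ):ℂ) := by push_cast; ring
    have h2 : Complex.I * (s:ℂ) / (β:ℂ) = Complex.I * ((s/β : ℝ):ℂ) := by push_cast; ring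
    have ha : Real.sqrt ((s*β)/2) = β * a := by
      rw [ha_def, habs]
      rw [show (s*β)/2 = β^2 * (s/(2*β)) by field_simp, Real.sqrt_mul (sq_nonneg β),
        Real.sqrt_sq hβ.le]
    have hb : Real.sqrt ((s/β)/2) = a := by
      rw [ha_def, habs, show (s/β)/2 = s/(2*β) by ring]
    rw [p1, p2, h1, h2, cpow_half_I_pos _ (mul_pos h hβ),
      cpow_half_I_pos _ (div_pos h hβ), ha, hb]
    have hw : ((a:ℝ) : ℂ) * (1 + Complex.I) = (a:ℂ) + ((a : ℝ):ℂ) * Complex.I := by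
      ring
    have hsinh : Complex.sinh ((a:ℂ) + ((a : ℝ):ℂ) * Complex.I)
        = ((Real.sinh a * Real.cos a : ℝ):ℂ)
          + ((Real.cosh a * Real.sin a : ℝ):ℂ) * Complex.I := by
      rw [Complex.sinh_add, Complex.sinh_mul_I, Complex.cosh_mul_I, ← Complex.ofReal_sinh,
        ← Complex.ofReal_cosh, ← Complex.ofReal_sin, ← Complex.ofReal_cos]
      push_cast
      ring
    have hcosh : Complex.cosh ((a:ℂ) + ((a : ℝ):ℂ) * Complex.I)
        = ((Real.cosh a * Real.cos a : ℝ):ℂ)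
          + ((Real.sinh a * Real.sin a : ℝ):ℂ) * Complex.I := by
      rw [Complex.cosh_add, Complex.sinh_mul_I, Complex.cosh_mul_I, ← Complex.ofReal_sinh,
        ← Complex.ofReal_cosh, ← Complex.ofReal_sin, ← Complex.ofReal_cos]
      push_cast
      ring
    rw [hw, Complex.tanh_eq_sinh_div_cosh, div_div_eq_mul_div, hsinh, hcosh]
    constructor
    · simp only [Complex.div_re, Complex.neg_re, Complex.neg_im, Complex.mul_re, Complex.mul_im,
        Complex.add_re, Complex.add_im, Complex.sub_re, Complex.sub_im, Complex.one_re,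
        Complex.one_im, Complex.I_re, Complex.I_im, Complex.ofReal_re, Complex.ofReal_im,
        Complex.normSq_apply, mul_zero, zero_mul, mul_one, sub_zero, zero_sub, add_zero,
        zero_add, neg_zero, neg_neg, mul_neg, neg_mul]
      rw [hD2]
      field_simp
      linear_combination (Real.cosh a * Real.sinh a) * hP
        + (Real.cos a * Real.sin a) * hC
    · simp only [Complex.div_re, Complex.neg_re, Complex.neg_im, Complex.mul_re, Complex.mul_im,
        Complex.add_re, Complex.add_im, Complex.sub_re, Complex.sub_im, Complex.one_re,
        Complex.one_im, Complex.I_re, Complex.I_im, Complex.ofReal_re, Complex.ofReal_im,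
        Complex.normSq_apply, mul_zero, zero_mul, mul_one, sub_zero, zero_sub, add_zero,
        zero_add, neg_zero, neg_neg, mul_neg, neg_mul]
      rw [hD2]
      field_simp
      ring_nf

/-- the hyperbolic/trigonometric identity
(cosh a sinh a + cos a sin a)² − (cos a sinh a + cosh a sin a)² =
(sinh²a − sin²a)(sinh²a + sin²a) for a > 0, and consequently
(Re p₁(is))² − (Re p₂(is))² = (β|s|/2)(sinh²a − sin²a)/(sinh²a + sin²a) > 0
with a = √(|s|/(2β)). -/
theorem re_p1_sq_sub_re_p2_sq :
    (∀ a : ℝ, 0 < a →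
      (Real.cosh a * Real.sinh a + Real.cos a * Real.sin a) ^ 2
          - (Real.cos a * Real.sinh a + Real.cosh a * Real.sin a) ^ 2
        = (Real.sinh a ^ 2 - Real.sin a ^ 2) * (Real.sinh a ^ 2 + Real.sin a ^ 2))
    ∧ ∀ (β s : ℝ), 0 < β → s ≠ 0 →
        (p1 β (Complex.I * (s : ℂ))).re ^ 2 - (p2 β (Complex.I * (s : ℂ))).re ^ 2
            = β * |s| / 2
                * ((Real.sinh (Real.sqrt (|s| / (2 * β))) ^ 2
                      - Real.sin (Real.sqrt (|s| / (2 * β))) ^ 2)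
                    / (Real.sinh (Real.sqrt (|s| / (2 * β))) ^ 2
                        + Real.sin (Real.sqrt (|s| / (2 * β))) ^ 2))
          ∧ 0 < (p1 β (Complex.I * (s : ℂ))).re ^ 2
                  - (p2 β (Complex.I * (s : ℂ))).re ^ 2 := by
  have hident : ∀ a : ℝ,
      (Real.cosh a * Real.sinh a + Real.cos a * Real.sin a) ^ 2
          - (Real.cos a * Real.sinh a + Real.cosh a * Real.sin a) ^ 2
        = (Real.sinh a ^ 2 - Real.sin a ^ 2) * (Real.sinh a ^ 2 + Real.sin a ^ 2) := by
    intro a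
    have hC : Real.cosh a ^ 2 = Real.sinh a ^ 2 + 1 := Real.cosh_sq a
    have hP : Real.sin a ^ 2 + Real.cos a ^ 2 = 1 := Real.sin_sq_add_cos_sq a
    linear_combination (Real.sinh a ^ 2 - Real.sin a ^ 2) * hC
      - (Real.sinh a ^ 2 - Real.sin a ^ 2) * hP
  refine ⟨fun a _ => hident a, fun β s hβ hs => ?_⟩
  obtain ⟨e1, e2⟩ := p_re β s hβ hs
  rw [e1, e2]
  set a := Real.sqrt (|s|/(2*β)) with ha_def
  have hsabs : 0 < |s| := abs_pos.2 hs
  have ha0 : 0 < a := Real.sqrt_pos.2 (by positivity)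
  have ha2 : a ^ 2 = |s| / (2*β) := Real.sq_sqrt (by positivity)
  have hS : 0 < Real.sinh a := Real.sinh_pos_iff.2 ha0
  have hD : 0 < Real.sinh a ^ 2 + Real.sin a ^ 2 := by nlinarith
  have hnum : 0 < Real.sinh a ^ 2 - Real.sin a ^ 2 := by
    have h1 : Real.sin a ^ 2 < a ^ 2 := Real.sin_sq_lt_sq (ne_of_gt ha0)
    have h2 : a < Real.sinh a := Real.self_lt_sinh_iff.2 ha0
    nlinarith
  have hba : β ^ 2 * a ^ 2 = β * |s| / 2 := by
    rw [ha2]; field_simp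
  have heq : (β * a * (Real.cosh a * Real.sinh a + Real.cos a * Real.sin a)
        / (Real.sinh a ^ 2 + Real.sin a ^ 2)) ^ 2
      - (-(β * a * (Real.cos a * Real.sinh a + Real.cosh a * Real.sin a))
        / (Real.sinh a ^ 2 + Real.sin a ^ 2)) ^ 2
      = β * |s| / 2 * ((Real.sinh a ^ 2 - Real.sin a ^ 2)
          / (Real.sinh a ^ 2 + Real.sin a ^ 2)) := by
    have hid := hident a
    calc (β * a * (Real.cosh a * Real.sinh a + Real.cos a * Real.sin a)
        / (Real.sinh a ^ 2 + Real.sin a ^ 2)) ^ 2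
      - (-(β * a * (Real.cos a * Real.sinh a + Real.cosh a * Real.sin a))
        / (Real.sinh a ^ 2 + Real.sin a ^ 2)) ^ 2
        = β ^ 2 * a ^ 2 * (((Real.cosh a * Real.sinh a + Real.cos a * Real.sin a) ^ 2
            - (Real.cos a * Real.sinh a + Real.cosh a * Real.sin a) ^ 2)
            / (Real.sinh a ^ 2 + Real.sin a ^ 2) / (Real.sinh a ^ 2 + Real.sin a ^ 2)) := by
          ring
      _ = β ^ 2 * a ^ 2 * ((Real.sinh a ^ 2 - Real.sin a ^ 2)
            * (Real.sinh a ^ 2 + Real.sin a ^ 2)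
            / (Real.sinh a ^ 2 + Real.sin a ^ 2) / (Real.sinh a ^ 2 + Real.sin a ^ 2)) := by
          rw [hid]
      _ = β ^ 2 * a ^ 2 * ((Real.sinh a ^ 2 - Real.sin a ^ 2)
            / (Real.sinh a ^ 2 + Real.sin a ^ 2)) := by
          rw [mul_div_cancel_right₀ _ hD.ne']
      _ = β * |s| / 2 * ((Real.sinh a ^ 2 - Real.sin a ^ 2)
            / (Real.sinh a ^ 2 + Real.sin a ^ 2)) := by rw [hba]
  refine ⟨heq, ?_⟩
  rw [heq]
  exact mul_pos (by positivity) (div_pos hnum hD)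
end

section
/- Let β > 0 and s ∈ ℝ with |s| ≥ ε > 0, and set a = √(|s|/(2β)). Then Re p₁(is) + Re p₂(is) ≥ c_ε(1 + |s|^{1/2}) for some constant c_ε > 0 depending only on β and ε; equivalently, βa·[(cosh a − cos a)(sinh a − sin a)]/(sinh²a + sin²a) ≥ c_ε(1 + √(2β)·a). -/
open Complex

lemma sqrt_I_mul (r : ℝ) (hr : 0 < r) :
    (Complex.I * (r:ℂ)) ^ ((1:ℂ)/2) = ((Real.sqrt (r/2) : ℝ):ℂ) * (1 + Complex.I) := by
  have h2 : (0:ℝ) < Real.sqrt (r/2) := Real.sqrt_pos.2 (by positivity)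
  have hsq : ((Real.sqrt (r/2) : ℝ):ℂ) ^ 2 = ((r/2 : ℝ) : ℂ) := by
    rw [← Complex.ofReal_pow, Real.sq_sqrt (by positivity)]
  have key : (((Real.sqrt (r/2) : ℝ):ℂ) * (1 + Complex.I)) ^ (2:ℕ) = Complex.I * r := by
    have : (((Real.sqrt (r/2) : ℝ):ℂ) * (1 + Complex.I)) ^ (2:ℕ)
        = ((Real.sqrt (r/2) : ℝ):ℂ)^2 * (1 + 2*Complex.I + Complex.I^2) := by ring
    rw [this, Complex.I_sq, hsq]
    push_cast; ring
  have hre : 0 < ((((Real.sqrt (r/2) : ℝ):ℂ)) * (1 + Complex.I)).re := by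
    simpa [Complex.mul_re] using h2
  rw [show (1:ℂ)/2 = ((2:ℂ))⁻¹ by norm_num, ← key, Complex.sq_cpow_two_inv hre]

lemma re_p_sum (β t : ℝ) (hβ : 0 < β) (ht : 0 < t) :
    (p1 β (Complex.I * (t:ℂ))).re + (p2 β (Complex.I * (t:ℂ))).re
      = β * Real.sqrt (t/(2*β)) *
          ((Real.cosh (Real.sqrt (t/(2*β))) - Real.cos (Real.sqrt (t/(2*β)))) *
            (Real.sinh (Real.sqrt (t/(2*β))) - Real.sin (Real.sqrt (t/(2*β)))))
        / (Real.sinh (Real.sqrt (t/(2*β))) ^ 2 + Real.sin (Real.sqrt (t/(2*β))) ^ 2) := by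
  set a := Real.sqrt (t/(2*β)) with ha
  have ha0 : 0 < a := Real.sqrt_pos.2 (by positivity)
  have hβ' : (β:ℂ) ≠ 0 := by exact_mod_cast hβ.ne'
  set u : ℂ := ((a:ℝ):ℂ) * (1 + Complex.I) with hu
  have h1 : (Complex.I * (t:ℂ) * (β:ℂ)) ^ ((1:ℂ)/2) = (β:ℂ) * u := by
    have e1 : Complex.I * (t:ℂ) * (β:ℂ) = Complex.I * ((t*β : ℝ):ℂ) := by push_cast; ring
    have e2 : Real.sqrt (t*β/2) = β * a := by
      have : t*β/2 = β^2 * (t/(2*β)) := by field_simp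
      rw [this, Real.sqrt_mul (by positivity), Real.sqrt_sq hβ.le]
    rw [e1, sqrt_I_mul _ (by positivity), e2, hu]
    push_cast; ring
  have h2 : (Complex.I * (t:ℂ) / (β:ℂ)) ^ ((1:ℂ)/2) = u := by
    have e1 : Complex.I * (t:ℂ) / (β:ℂ) = Complex.I * ((t/β : ℝ):ℂ) := by
      push_cast; field_simp
    have e2 : t/β/2 = t/(2*β) := by ring
    rw [e1, sqrt_I_mul _ (by positivity), e2, ← ha, hu]
  have hue : u = ((a:ℝ):ℂ) + ((a:ℝ):ℂ) * Complex.I := by rw [hu]; ring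
  have hsinh : Complex.sinh u
      = ((Real.sinh a * Real.cos a : ℝ):ℂ) + ((Real.cosh a * Real.sin a : ℝ):ℂ) * Complex.I := by
    rw [hue, Complex.sinh_add, Complex.sinh_mul_I, Complex.cosh_mul_I,
      ← Complex.ofReal_sinh, ← Complex.ofReal_cosh, ← Complex.ofReal_sin, ← Complex.ofReal_cos]
    push_cast; ring
  have hcosh : Complex.cosh u
      = ((Real.cosh a * Real.cos a : ℝ):ℂ) + ((Real.sinh a * Real.sin a : ℝ):ℂ) * Complex.I := by
    rw [hue, Complex.cosh_add, Complex.sinh_mul_I, Complex.cosh_mul_I,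
      ← Complex.ofReal_sinh, ← Complex.ofReal_cosh, ← Complex.ofReal_sin, ← Complex.ofReal_cos]
    push_cast; ring
  have hsa : 0 < Real.sinh a := by
    rw [← Real.sinh_zero]; exact Real.sinh_lt_sinh.2 ha0
  have hca : 0 < Real.cosh a := Real.cosh_pos a
  have hsinh_ne : Complex.sinh u ≠ 0 := by
    rw [hsinh]
    intro h
    rw [Complex.ext_iff] at h
    simp only [Complex.add_re, Complex.ofReal_re, Complex.mul_re, Complex.I_re, Complex.I_im,
      Complex.ofReal_im, Complex.add_im, Complex.mul_im, Complex.zero_re, Complex.zero_im] at h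
    obtain ⟨h1', h2'⟩ := h
    have h1'' : Real.sinh a * Real.cos a = 0 := by linarith
    have h2'' : Real.cosh a * Real.sin a = 0 := by linarith
    have hsin : Real.sin a = 0 := by
      rcases mul_eq_zero.1 h2'' with h | h
      · exact absurd h hca.ne'
      · exact h
    have hcos : Real.cos a ≠ 0 := by
      intro h0
      have := Real.sin_sq_add_cos_sq a
      rw [hsin, h0] at this; norm_num at this
    rcases mul_eq_zero.1 h1'' with h | h
    · exact absurd h hsa.ne'
    · exact absurd h hcos
  have hcosh_ne : Complex.cosh u ≠ 0 := by
    rw [hcosh]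
    intro h
    rw [Complex.ext_iff] at h
    simp only [Complex.add_re, Complex.ofReal_re, Complex.mul_re, Complex.I_re, Complex.I_im,
      Complex.ofReal_im, Complex.add_im, Complex.mul_im, Complex.zero_re, Complex.zero_im] at h
    obtain ⟨h1', h2'⟩ := h
    have h1'' : Real.cosh a * Real.cos a = 0 := by linarith
    have h2'' : Real.sinh a * Real.sin a = 0 := by linarith
    have hcos : Real.cos a = 0 := by
      rcases mul_eq_zero.1 h1'' with h | h
      · exact absurd h hca.ne'
      · exact h
    have hsin : Real.sin a ≠ 0 := by
      intro h0
      have := Real.sin_sq_add_cos_sq a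
      rw [hcos, h0] at this; norm_num at this
    rcases mul_eq_zero.1 h2'' with h | h
    · exact absurd h hsa.ne'
    · exact absurd h hsin
  have hsum : p1 β (Complex.I * (t:ℂ)) + p2 β (Complex.I * (t:ℂ))
      = (β:ℂ) * u * (Complex.cosh u - 1) / Complex.sinh u := by
    rw [p1, p2, h1, h2, Complex.tanh_eq_sinh_div_cosh]
    field_simp
    ring
  have hre : (p1 β (Complex.I * (t:ℂ))).re + (p2 β (Complex.I * (t:ℂ))).re
      = ((β:ℂ) * u * (Complex.cosh u - 1) / Complex.sinh u).re := by
    rw [← Complex.add_re, hsum]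
  have hNS : Complex.normSq (Complex.sinh u) = Real.sinh a ^ 2 + Real.sin a ^ 2 := by
    rw [hsinh]
    simp only [Complex.normSq_apply, Complex.add_re, Complex.ofReal_re, Complex.mul_re,
      Complex.I_re, Complex.I_im, Complex.ofReal_im, Complex.add_im, Complex.mul_im]
    linear_combination (Real.sinh a ^ 2) * Real.sin_sq_add_cos_sq a
      + Real.sin a ^ 2 * Real.cosh_sq a
  rw [hre, Complex.div_re, hNS, ← add_div]
  congr 1
  rw [hcosh, hsinh, hu]
  simp only [Complex.mul_re, Complex.mul_im, Complex.add_re, Complex.add_im, Complex.sub_re,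
    Complex.sub_im, Complex.one_re, Complex.one_im, Complex.I_re, Complex.I_im,
    Complex.ofReal_re, Complex.ofReal_im]
  linear_combination (β * a * Real.sinh a * Real.cosh a) * Real.sin_sq_add_cos_sq a
    + (β * a * Real.sin a * Real.cos a) * Real.cosh_sq a

lemma lower (β ε : ℝ) (hβ : 0 < β) (hε : 0 < ε) :
    ∃ c > (0:ℝ), ∀ a : ℝ, Real.sqrt (ε/(2*β)) ≤ a →
      c * (1 + Real.sqrt (2*β) * a)
        ≤ β * a * ((Real.cosh a - Real.cos a) * (Real.sinh a - Real.sin a))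
            / (Real.sinh a ^ 2 + Real.sin a ^ 2) := by
  set a₀ := Real.sqrt (ε/(2*β)) with ha₀def
  have ha₀ : 0 < a₀ := Real.sqrt_pos.2 (by positivity)
  set b := Real.sqrt (2*β) with hbdef
  have hb : 0 < b := Real.sqrt_pos.2 (by positivity)
  set a₁ := min a₀ 2 with ha₁def
  have ha₁ : 0 < a₁ := lt_min ha₀ (by norm_num)
  have ha₁2 : a₁ ≤ 2 := min_le_right _ _
  set f : ℝ → ℝ := fun x =>
    β * x * ((Real.cosh x - Real.cos x) * (Real.sinh x - Real.sin x))
      / (Real.sinh x ^ 2 + Real.sin x ^ 2) with hf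
  have hfpos : ∀ x : ℝ, 0 < x → 0 < f x := by
    intro x hx
    have hsx : 0 < Real.sinh x := by
      rw [← Real.sinh_zero]; exact Real.sinh_lt_sinh.2 hx
    have hcc : 0 < Real.cosh x - Real.cos x := by
      have h1 := Real.cos_le_one x
      have h2 : 1 < Real.cosh x := Real.one_lt_cosh.2 hx.ne'
      linarith
    have hss : 0 < Real.sinh x - Real.sin x := by
      have h1 := Real.sin_lt hx
      have h2 : x < Real.sinh x := Real.self_lt_sinh_iff.2 hx
      linarith
    have hD : 0 < Real.sinh x ^ 2 + Real.sin x ^ 2 := by positivity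
    exact div_pos (mul_pos (mul_pos hβ hx) (mul_pos hcc hss)) hD
  have hcont : ContinuousOn f (Set.Icc a₁ 2) := by
    apply ContinuousOn.div
    · fun_prop
    · fun_prop
    · intro x hx
      have hx0 : 0 < x := lt_of_lt_of_le ha₁ hx.1
      have hsx : 0 < Real.sinh x := by
        rw [← Real.sinh_zero]; exact Real.sinh_lt_sinh.2 hx0
      positivity
  obtain ⟨x₀, hx₀S, hx₀min⟩ :=
    isCompact_Icc.exists_isMinOn ⟨a₁, Set.mem_Icc.2 ⟨le_refl _, ha₁2⟩⟩ hcont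
  have hm : 0 < f x₀ := hfpos x₀ (lt_of_lt_of_le ha₁ hx₀S.1)
  refine ⟨min ((β/8)/(1/2+b)) ((f x₀)/(1+2*b)), by positivity, ?_⟩
  intro a haa
  have ha : 0 < a := lt_of_lt_of_le ha₀ haa
  rcases le_or_gt 2 a with h2 | h2
  · -- large regime
    have hsl : a < Real.sinh a := Real.self_lt_sinh_iff.2 ha
    have hs2 : 2 ≤ Real.sinh a := by linarith
    have hsc : Real.sinh a < Real.cosh a := Real.sinh_lt_cosh a
    have hcos1 := Real.cos_le_one a
    have hsin1 := Real.sin_le_one a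
    have hN : Real.sinh a ^ 2 / 4 ≤ (Real.cosh a - Real.cos a) * (Real.sinh a - Real.sin a) := by
      have e1 : Real.sinh a/2 ≤ Real.cosh a - Real.cos a := by linarith
      have e2 : Real.sinh a/2 ≤ Real.sinh a - Real.sin a := by linarith
      have e3 : (0:ℝ) ≤ Real.sinh a/2 := by linarith
      calc Real.sinh a^2/4 = (Real.sinh a/2) * (Real.sinh a/2) := by ring
        _ ≤ (Real.cosh a - Real.cos a) * (Real.sinh a - Real.sin a) :=
            mul_le_mul e1 e2 e3 (by linarith)
    have hDle : Real.sinh a ^ 2 + Real.sin a ^ 2 ≤ 2 * Real.sinh a ^ 2 := by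
      have := Real.sin_sq_le_one a
      nlinarith
    have hD : (0:ℝ) < Real.sinh a ^ 2 + Real.sin a ^ 2 := by positivity
    have hfa : β * a / 8 ≤ f a := by
      have step : β * a * (Real.sinh a ^ 2 / 4) / (2 * Real.sinh a ^ 2)
          ≤ β * a * ((Real.cosh a - Real.cos a) * (Real.sinh a - Real.sin a))
              / (Real.sinh a ^ 2 + Real.sin a ^ 2) := by
        have hnum : β * a * (Real.sinh a ^ 2 / 4)
            ≤ β * a * ((Real.cosh a - Real.cos a) * (Real.sinh a - Real.sin a)) :=
          mul_le_mul_of_nonneg_left hN (by positivity)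
        exact div_le_div₀ (le_trans (by positivity) hnum) hnum hD hDle
      have heq : β * a * (Real.sinh a ^ 2 / 4) / (2 * Real.sinh a ^ 2) = β * a / 8 := by
        have : Real.sinh a ≠ 0 := by positivity
        field_simp; ring
      rw [hf]; rw [heq] at step; exact step
    have hc1 : min ((β/8)/(1/2+b)) ((f x₀)/(1+2*b)) ≤ (β/8)/(1/2+b) := min_le_left _ _
    have hmono : min ((β/8)/(1/2+b)) ((f x₀)/(1+2*b)) * (1 + b*a) ≤ (β/8)/(1/2+b) * ((1/2+b)*a) := by
      apply mul_le_mul hc1 (by nlinarith) (by positivity) (by positivity)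
    have heq2 : (β/8)/(1/2+b) * ((1/2+b)*a) = β * a / 8 := by
      field_simp
    calc min ((β/8)/(1/2+b)) ((f x₀)/(1+2*b)) * (1 + b*a)
        ≤ β * a / 8 := by rw [← heq2]; exact hmono
      _ ≤ f a := hfa
  · -- middle regime
    have hmem : a ∈ Set.Icc a₁ 2 := ⟨le_trans (min_le_left _ _) haa, h2.le⟩
    have hfa : f x₀ ≤ f a := (isMinOn_iff.1 hx₀min) a hmem
    have hba : 1 + b * a ≤ 1 + 2 * b := by nlinarith
    have : min ((β/8)/(1/2+b)) ((f x₀)/(1+2*b)) * (1 + b*a) ≤ (f x₀)/(1+2*b) * (1+2*b) := by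
      apply mul_le_mul (min_le_right _ _) hba (by positivity) (by positivity)
    have heq : (f x₀)/(1+2*b) * (1+2*b) = f x₀ := by field_simp
    calc min ((β/8)/(1/2+b)) ((f x₀)/(1+2*b)) * (1 + b*a)
        ≤ (f x₀)/(1+2*b) * (1+2*b) := this
      _ = f x₀ := heq
      _ ≤ f a := hfa

lemma re_sum_neg (β s : ℝ) (hβ : 0 < β) (hs : s < 0) :
    (p1 β (Complex.I * (s:ℂ))).re + (p2 β (Complex.I * (s:ℂ))).re
      = (p1 β (Complex.I * ((-s:ℝ):ℂ))).re + (p2 β (Complex.I * ((-s:ℝ):ℂ))).re := by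
  have hβ' : (β:ℂ) ≠ 0 := by exact_mod_cast hβ.ne'
  have harg1 : (Complex.I * ((-s:ℝ):ℂ) * (β:ℂ)).arg ≠ Real.pi := by
    rw [Ne, Complex.arg_eq_pi_iff]
    rintro ⟨h1, h2⟩
    simp [Complex.mul_im, Complex.mul_re] at h2
    rcases h2 with h | h
    · nlinarith
    · exact hβ.ne' h
  have harg2 : (Complex.I * ((-s:ℝ):ℂ) / (β:ℂ)).arg ≠ Real.pi := by
    have hrepr : Complex.I * ((-s:ℝ):ℂ) / (β:ℂ) = Complex.I * (((-s)/β : ℝ):ℂ) := by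
      push_cast; field_simp
    rw [hrepr, Ne, Complex.arg_eq_pi_iff]
    rintro ⟨h1, h2⟩
    simp [Complex.mul_im, Complex.mul_re] at h2
    rcases h2 with h | h
    · exact absurd h hs.ne
    · exact absurd h hβ.ne'
  have hconj1 : Complex.I * (s:ℂ) * (β:ℂ) = (starRingEnd ℂ) (Complex.I * ((-s:ℝ):ℂ) * (β:ℂ)) := by
    simp [map_mul, Complex.conj_I, Complex.conj_ofReal]
  have hconj2 : Complex.I * (s:ℂ) / (β:ℂ) = (starRingEnd ℂ) (Complex.I * ((-s:ℝ):ℂ) / (β:ℂ)) := by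
    simp [map_div₀, map_mul, Complex.conj_I, Complex.conj_ofReal]
  have hhalf : (starRingEnd ℂ) ((1:ℂ)/2) = (1:ℂ)/2 := by
    simp [map_div₀, map_ofNat]
  have hc1 : (Complex.I * (s:ℂ) * (β:ℂ)) ^ ((1:ℂ)/2)
      = (starRingEnd ℂ) ((Complex.I * ((-s:ℝ):ℂ) * (β:ℂ)) ^ ((1:ℂ)/2)) := by
    rw [hconj1, Complex.conj_cpow _ _ harg1, hhalf]
  have hc2 : (Complex.I * (s:ℂ) / (β:ℂ)) ^ ((1:ℂ)/2)
      = (starRingEnd ℂ) ((Complex.I * ((-s:ℝ):ℂ) / (β:ℂ)) ^ ((1:ℂ)/2)) := by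
    rw [hconj2, Complex.conj_cpow _ _ harg2, hhalf]
  have hp1 : p1 β (Complex.I * (s:ℂ)) = (starRingEnd ℂ) (p1 β (Complex.I * ((-s:ℝ):ℂ))) := by
    rw [p1, p1, hc1, hc2, Complex.tanh_conj, ← map_div₀]
  have hp2 : p2 β (Complex.I * (s:ℂ)) = (starRingEnd ℂ) (p2 β (Complex.I * ((-s:ℝ):ℂ))) := by
    rw [p2, p2, hc1, hc2, Complex.sinh_conj, ← map_neg, ← map_div₀]
  rw [hp1, hp2, Complex.conj_re, Complex.conj_re]

/-- for |s| ≥ ε > 0 and a = √(|s|/(2β)),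
Re p₁(is) + Re p₂(is) ≥ c_ε(1 + |s|^{1/2}); equivalently
βa(cosh a − cos a)(sinh a − sin a)/(sinh²a + sin²a) ≥ c_ε(1 + √(2β)·a). -/
theorem re_p1_add_re_p2_lower_bound (β ε : ℝ) (hβ : 0 < β) (hε : 0 < ε) :
    ∃ c > (0:ℝ), ∀ s : ℝ, ε ≤ |s| →
      c * (1 + Real.sqrt |s|)
          ≤ (p1 β (Complex.I * (s : ℂ))).re + (p2 β (Complex.I * (s : ℂ))).re
        ∧ c * (1 + Real.sqrt (2 * β) * Real.sqrt (|s| / (2 * β)))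
          ≤ β * Real.sqrt (|s| / (2 * β))
              * ((Real.cosh (Real.sqrt (|s| / (2 * β))) - Real.cos (Real.sqrt (|s| / (2 * β))))
                  * (Real.sinh (Real.sqrt (|s| / (2 * β))) - Real.sin (Real.sqrt (|s| / (2 * β)))))
              / (Real.sinh (Real.sqrt (|s| / (2 * β))) ^ 2
                  + Real.sin (Real.sqrt (|s| / (2 * β))) ^ 2) := by
  obtain ⟨c, hc, hcbound⟩ := lower β ε hβ hε
  refine ⟨c, hc, ?_⟩
  intro s hsε
  have hs0 : 0 < |s| := lt_of_lt_of_le hε hsε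
  have haa : Real.sqrt (ε/(2*β)) ≤ Real.sqrt (|s|/(2*β)) := by
    apply Real.sqrt_le_sqrt
    gcongr
  have key := hcbound (Real.sqrt (|s|/(2*β))) haa
  have hsqrt : Real.sqrt (2*β) * Real.sqrt (|s|/(2*β)) = Real.sqrt |s| := by
    rw [← Real.sqrt_mul (by positivity)]
    congr 1
    field_simp
  have hre : (p1 β (Complex.I * (s:ℂ))).re + (p2 β (Complex.I * (s:ℂ))).re
      = β * Real.sqrt (|s|/(2*β))
          * ((Real.cosh (Real.sqrt (|s|/(2*β))) - Real.cos (Real.sqrt (|s|/(2*β))))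
              * (Real.sinh (Real.sqrt (|s|/(2*β))) - Real.sin (Real.sqrt (|s|/(2*β)))))
          / (Real.sinh (Real.sqrt (|s|/(2*β))) ^ 2 + Real.sin (Real.sqrt (|s|/(2*β))) ^ 2) := by
    rcases lt_trichotomy s 0 with hs | hs | hs
    · rw [abs_of_neg hs, re_sum_neg β s hβ hs]
      exact re_p_sum β (-s) hβ (by linarith)
    · exfalso; rw [hs] at hs0; simp at hs0
    · rw [abs_of_pos hs]
      exact re_p_sum β s hβ hs
  exact ⟨by rw [hre, ← hsqrt]; exact key, key⟩
end

section
/- Let A₀ be the operator on L²(0,1)² given by A₀(u,v) = (v', u') with domain {(u,v) ∈ H¹(0,1)² : v(0) = 0, u(1) + v(1) = 0}. Then for every λ ∈ ℂ with Re λ ≥ 0, the only solution (u,v) ∈ D(A₀) of λ(u,v) = (v',u') is (u,v) = (0,0); i.e., A₀ − λ is injective on the closed right half-plane. -/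
/-- If `f' = c * f` on `[0,1]` and `f` vanishes at some point of `[0,1]`,
then `f` vanishes on all of `[0,1]`. -/
lemma zero_of_linear_ode (c : ℂ) (f f' : ℝ → ℂ)
    (hf : ∀ x : ℝ, HasDerivAt f (f' x) x)
    (heq : ∀ x ∈ Set.Icc (0:ℝ) 1, f' x = c * f x)
    (a : ℝ) (ha : a ∈ Set.Icc (0:ℝ) 1) (h0 : f a = 0) :
    ∀ x ∈ Set.Icc (0:ℝ) 1, f x = 0 := by
  set g : ℝ → ℂ := fun x => f x * Complex.exp (-c * x) with hg
  have hexp : ∀ x : ℝ, HasDerivAt (fun y : ℝ => Complex.exp (-c * y))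
      (Complex.exp (-c * x) * (-c)) x := by
    intro x
    have h1 : HasDerivAt (fun y : ℝ => -c * (y : ℂ)) (-c) x := by
      simpa using (Complex.ofRealCLM.hasDerivAt (x := x)).const_mul (-c)
    exact h1.cexp
  have hgd : ∀ x ∈ Set.Icc (0:ℝ) 1, HasDerivAt g 0 x := by
    intro x hx
    have h := (hf x).mul (hexp x)
    have hval : f' x * Complex.exp (-c * x) + f x * (Complex.exp (-c * x) * -c) = 0 := by
      rw [heq x hx]; ring
    exact hval ▸ h
  have hconst : ∀ x ∈ Set.Icc (0:ℝ) 1, g x = g 0 := by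
    apply constant_of_has_deriv_right_zero
    · exact fun x hx => ((hf x).mul (hexp x)).continuousAt.continuousWithinAt
    · exact fun x hx => ((hgd x (Set.mem_Icc_of_Ico hx)).hasDerivWithinAt)
  intro x hx
  have h1 : g x = g 0 := hconst x hx
  have h2 : g a = g 0 := hconst a ha
  have h3 : g a = 0 := by simp [hg, h0]
  have h4 : g x = 0 := by rw [h1, ← h2, h3]
  have h5 : f x * Complex.exp (-c * x) = 0 := h4
  rcases mul_eq_zero.mp h5 with h | h
  · exact h
  · exact absurd h (Complex.exp_ne_zero _)

/-- the boundary-damped wave operator A₀(u,v) = (v',u') on a single edge,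
with boundary conditions v(0) = 0 and u(1) + v(1) = 0, has no eigenvalues in the closed
right half-plane: if Re λ ≥ 0 and λu = v', λv = u' on [0,1] with these boundary
conditions, then u = v = 0 on [0,1]. -/
theorem damped_wave_no_eigenvalues_right_half_plane
    (lam : ℂ) (hlam : 0 ≤ lam.re) (u v u' v' : ℝ → ℂ)
    (hu : ∀ x : ℝ, HasDerivAt u (u' x) x)
    (hv : ∀ x : ℝ, HasDerivAt v (v' x) x)
    (heq1 : ∀ x ∈ Set.Icc (0:ℝ) 1, lam * u x = v' x)
    (heq2 : ∀ x ∈ Set.Icc (0:ℝ) 1, lam * v x = u' x)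
    (hbc0 : v 0 = 0) (hbc1 : u 1 + v 1 = 0) :
    ∀ x ∈ Set.Icc (0:ℝ) 1, u x = 0 ∧ v x = 0 := by
  have h1 : (1:ℝ) ∈ Set.Icc (0:ℝ) 1 := by norm_num
  have h0 : (0:ℝ) ∈ Set.Icc (0:ℝ) 1 := by norm_num
  -- w = u + v satisfies w' = lam * w, w(1) = 0
  have hw : ∀ x ∈ Set.Icc (0:ℝ) 1, u x + v x = 0 := by
    apply zero_of_linear_ode lam (fun x => u x + v x) (fun x => u' x + v' x)
      (fun x => (hu x).add (hv x)) _ 1 h1 hbc1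
    intro x hx
    show u' x + v' x = lam * (u x + v x)
    rw [← heq1 x hx, ← heq2 x hx]; ring
  -- z = u - v satisfies z' = -lam * z, z(0) = 0
  have hz : ∀ x ∈ Set.Icc (0:ℝ) 1, u x - v x = 0 := by
    apply zero_of_linear_ode (-lam) (fun x => u x - v x) (fun x => u' x - v' x)
      (fun x => (hu x).sub (hv x)) _ 0 h0 _
    · intro x hx
      show u' x - v' x = -lam * (u x - v x)
      rw [← heq1 x hx, ← heq2 x hx]; ring
    · have hw0 := hw 0 h0
      simp [hbc0] at hw0 ⊢
      simp [hw0, hbc0]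
  intro x hx
  have a1 := hw x hx
  have a2 := hz x hx
  constructor
  · have : (2:ℂ) * u x = 0 := by linear_combination a1 + a2
    simpa using this
  · have : (2:ℂ) * v x = 0 := by linear_combination a1 - a2
    simpa using this
end
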